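/- Let S = [[A, B],[Bᵀ, 0]] be invertible with A ∈ ℝ^{n×n}, B ∈ ℝ^{n×M} full column rank. Suppose the augmented matrix S' = [[S, C],[Cᵀ, 0]] is also invertible, where C = [[Q],[0]] with Q ∈ ℝ^{n×K}. Let (w, v) solve S (w; v) = (g; p) and let (w', v', u') solve S' (w'; v'; u') = (g; p; q). Define Λ ∈ ℝ^{n×K} as the first n rows of S^{-1}(Q; 0), i.e., S(Λ; Γ) = (Q; 0) columnwise. If QᵀΛ is invertible, then w' = w − Λ (QᵀΛ)^{-1} (Qᵀ w − q). -/
import Mathlib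


open Matrix

/-- Block-matrix update formula for kernel approximation weights when the
supplemental polynomial space is enlarged: if `S (w; v) = (g; p)`,
`S' (w'; v'; u') = (g; p; q)` with `S' = [[S, C],[Cᵀ, 0]]`, `C = (Q; 0)`,
`S (Λ; Γ) = (Q; 0)` columnwise, and `QᵀΛ` is invertible, then
`w' = w − Λ (QᵀΛ)⁻¹ (Qᵀ w − q)`. -/
theorem weight_update_formula (n M K : ℕ)
    (A : Matrix (Fin n) (Fin n) ℝ) (B : Matrix (Fin n) (Fin M) ℝ)
    (hB : Function.Injective B.mulVecLin)
    (Q : Matrix (Fin n) (Fin K) ℝ)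
    (S : Matrix (Fin n ⊕ Fin M) (Fin n ⊕ Fin M) ℝ)
    (hS : S = Matrix.fromBlocks A B B.transpose 0)
    (C : Matrix (Fin n ⊕ Fin M) (Fin K) ℝ)
    (hC : C = Matrix.of fun i k => Sum.casesOn i (fun i' => Q i' k) (fun _ => 0))
    (S' : Matrix ((Fin n ⊕ Fin M) ⊕ Fin K) ((Fin n ⊕ Fin M) ⊕ Fin K) ℝ)
    (hS' : S' = Matrix.fromBlocks S C C.transpose 0)
    (hSinv : IsUnit S) (hS'inv : IsUnit S')
    (g : Fin n → ℝ) (p : Fin M → ℝ) (q : Fin K → ℝ)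
    (w : Fin n → ℝ) (v : Fin M → ℝ)
    (hwv : S.mulVec (Sum.elim w v) = Sum.elim g p)
    (w' : Fin n → ℝ) (v' : Fin M → ℝ) (u' : Fin K → ℝ)
    (hwvu : S'.mulVec (Sum.elim (Sum.elim w' v') u') = Sum.elim (Sum.elim g p) q)
    (Λ : Matrix (Fin n) (Fin K) ℝ) (Γ : Matrix (Fin M) (Fin K) ℝ)
    (hΛ : ∀ k, S.mulVec (Sum.elim (fun i => Λ i k) (fun j => Γ j k)) =
      Sum.elim (fun i => Q i k) 0)
    (hQΛ : IsUnit (Q.transpose * Λ)) :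
    w' = w - Λ.mulVec ((Q.transpose * Λ)⁻¹.mulVec (Q.transpose.mulVec w - q)) := by
  have hmul : S * (Matrix.of fun i k => Sum.casesOn i (fun i' => Λ i' k) (fun j => Γ j k) :
      Matrix (Fin n ⊕ Fin M) (Fin K) ℝ) = C := by
    ext i k
    rw [Matrix.mul_apply]
    have h1 : ∑ j, S i j *
        (Matrix.of fun i k => Sum.casesOn i (fun i' => Λ i' k) (fun j => Γ j k)) j k
        = S.mulVec (Sum.elim (fun i => Λ i k) fun j => Γ j k) i := by
      rw [Matrix.mulVec, dotProduct]
      refine Finset.sum_congr rfl fun j _ => ?_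
      cases j <;> rfl
    rw [h1, hΛ k, hC]
    cases i <;> rfl
  rw [hS', Matrix.fromBlocks_mulVec] at hwvu
  have eq1 : S.mulVec (Sum.elim w' v') + C.mulVec u' = Sum.elim g p := by
    funext x; have := congrFun hwvu (Sum.inl x); simpa using this
  have eq2 : C.transpose.mulVec (Sum.elim w' v') = q := by
    funext k; have := congrFun hwvu (Sum.inr k); simpa using this
  have key : Sum.elim w' v' +
      (Matrix.of fun i k => Sum.casesOn i (fun i' => Λ i' k) (fun j => Γ j k) :
        Matrix (Fin n ⊕ Fin M) (Fin K) ℝ).mulVec u' = Sum.elim w v := by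
    have hSmul : S.mulVec (Sum.elim w' v' +
        (Matrix.of fun i k => Sum.casesOn i (fun i' => Λ i' k) (fun j => Γ j k) :
          Matrix (Fin n ⊕ Fin M) (Fin K) ℝ).mulVec u') = Sum.elim g p := by
      rw [Matrix.mulVec_add, Matrix.mulVec_mulVec, hmul, eq1]
    exact Matrix.mulVec_injective_iff_isUnit.2 hSinv (hSmul.trans hwv.symm)
  have hw' : w' = w - Λ.mulVec u' := by
    funext i
    have := congrFun key (Sum.inl i)
    simp only [Pi.add_apply, Sum.elim_inl] at this
    have h2 : (Matrix.of fun i k => Sum.casesOn i (fun i' => Λ i' k) (fun j => Γ j k) :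
        Matrix (Fin n ⊕ Fin M) (Fin K) ℝ).mulVec u' (Sum.inl i) = Λ.mulVec u' i := rfl
    rw [h2] at this
    simp only [Pi.sub_apply]
    linarith
  have eq2' : Q.transpose.mulVec w' = q := by
    funext k
    have := congrFun eq2 k
    rw [Matrix.mulVec, dotProduct, Fintype.sum_sum_type] at this
    simpa [hC, Matrix.mulVec, dotProduct, Matrix.transpose_apply] using this
  have hQw : (Q.transpose * Λ).mulVec u' = Q.transpose.mulVec w - q := by
    have h3 : Q.transpose.mulVec (w - Λ.mulVec u') = q := by rw [← hw']; exact eq2'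
    rw [Matrix.mulVec_sub, Matrix.mulVec_mulVec] at h3
    funext k
    have := congrFun h3 k
    simp only [Pi.sub_apply] at this ⊢
    linarith
  have hu' : u' = ((Q.transpose * Λ)⁻¹).mulVec (Q.transpose.mulVec w - q) := by
    rw [← hQw, Matrix.mulVec_mulVec,
      Matrix.nonsing_inv_mul _ ((Matrix.isUnit_iff_isUnit_det _).mp hQΛ), Matrix.one_mulVec]
  rw [hw', hu']
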